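/- arXiv:2211.02387 — 3 statements merged into one kernel-verified Lean document; each statement's English description precedes it below -/
import Mathlib

section
/- Let K be a field of characteristic zero. For a free Lie algebra 𝔤 = L(V) on a vector space V of dimension at least 1, the universal enveloping algebra functor is not full: there exists an associative algebra homomorphism U𝔤 → U𝔤 that is not of the form U(f) for any Lie algebra homomorphism f : 𝔤 → 𝔤. -/
attribute [local instance 100] LieRing.ofAssociativeRing

/-- The algebra morphism `U(f)` induced by a Lie algebra morphism `f`. -/
noncomputable def UEnv.map {K 𝔤 𝔥 : Type*} [CommRing K]
    [LieRing 𝔤] [LieAlgebra K 𝔤] [LieRing 𝔥] [LieAlgebra K 𝔥] (f : 𝔤 →ₗ⁅K⁆ 𝔥) :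
    UniversalEnvelopingAlgebra K 𝔤 →ₐ[K] UniversalEnvelopingAlgebra K 𝔥 :=
  UniversalEnvelopingAlgebra.lift K ((UniversalEnvelopingAlgebra.ι K).comp f)

/-- over a field `K` of characteristic zero, for the free Lie algebra
`𝔤 = L(V)` on a nonzero vector space (here: on a nonempty type `X` of generators),
the universal enveloping algebra functor is not full: there is an algebra endomorphism
of `U𝔤` which is not `U(f)` for any Lie algebra endomorphism `f` of `𝔤`. -/
theorem universalEnveloping_not_full (K X : Type*) [Field K] [CharZero K] [Nonempty X] :
    ∃ φ : UniversalEnvelopingAlgebra K (FreeLieAlgebra K X) →ₐ[K]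
        UniversalEnvelopingAlgebra K (FreeLieAlgebra K X),
      ∀ f : FreeLieAlgebra K X →ₗ⁅K⁆ FreeLieAlgebra K X, φ ≠ UEnv.map f := by
  obtain ⟨x⟩ := ‹Nonempty X›
  -- φ sends each generator to 1
  refine ⟨UniversalEnvelopingAlgebra.lift K (FreeLieAlgebra.lift K fun _ => 1), ?_⟩
  intro f hφ
  -- counit ε : U𝔤 →ₐ K, killing ι
  set ε : UniversalEnvelopingAlgebra K (FreeLieAlgebra K X) →ₐ[K] K :=
    UniversalEnvelopingAlgebra.lift K (FreeLieAlgebra.lift K fun _ => (0:K)) with hε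
  have h1 : (UniversalEnvelopingAlgebra.lift K (FreeLieAlgebra.lift K fun _ =>
      (1 : UniversalEnvelopingAlgebra K (FreeLieAlgebra K X))))
      (UniversalEnvelopingAlgebra.ι K (FreeLieAlgebra.of K x)) = 1 := by
    rw [UniversalEnvelopingAlgebra.lift_ι_apply]
    simp
  have h2 : (UEnv.map f) (UniversalEnvelopingAlgebra.ι K (FreeLieAlgebra.of K x))
      = UniversalEnvelopingAlgebra.ι K (f (FreeLieAlgebra.of K x)) := by
    rw [UEnv.map, UniversalEnvelopingAlgebra.lift_ι_apply]; rfl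
  rw [hφ, h2] at h1
  have := congrArg ε h1
  have hz : (FreeLieAlgebra.lift K fun _ : X => (0:K)) = 0 := by
    rw [Equiv.apply_eq_iff_eq_symm_apply]
    funext y
    simp [FreeLieAlgebra.lift_symm_apply]
  rw [map_one, hε, UniversalEnvelopingAlgebra.lift_ι_apply, hz, LieHom.zero_apply] at this
  exact one_ne_zero (α := K) this.symm
end

section
/- Let A = K[x,y] be the polynomial ring in two commuting variables over a field K. In the category of unital differential graded associative algebras, a cofibrant replacement of A (placed in degree 0 with zero differential) is given by the free associative algebra K⟨x, y, z⟩ on generators x, y in degree 0 and z in degree 1, with differential determined by dz = xy − yx, dx = dy = 0. In particular, the map K⟨x,y,z⟩ → K[x,y] sending x↦x, y↦y, z↦0 is a quasi-isomorphism: it induces an isomorphism on all homology groups. -/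
open FreeAlgebra

/-- The projection `K⟨x,y,z⟩ → K[x,y]` sending `x ↦ x`, `y ↦ y`, `z ↦ 0`. -/
noncomputable def projPoly (K : Type*) [Field K] :
    FreeAlgebra K (Fin 3) →ₐ[K] MvPolynomial (Fin 2) K :=
  FreeAlgebra.lift K ![MvPolynomial.X 0, MvPolynomial.X 1, 0]

noncomputable section
namespace Res
variable (K : Type*) [Field K]
abbrev M := MonoidAlgebra K (FreeMonoid (Fin 3))

def sg (w : List (Fin 3)) : M K := MonoidAlgebra.single (FreeMonoid.ofList w) 1

@[simp] lemma sg_nil : sg K [] = 1 := rfl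

lemma sg_append (u v : List (Fin 3)) : sg K (u ++ v) = sg K u * sg K v := by
  simp [sg, FreeMonoid.ofList_append, MonoidAlgebra.single_mul_single]

lemma sg_cons (i : Fin 3) (w : List (Fin 3)) : sg K (i :: w) = sg K [i] * sg K w :=
  sg_append K [i] w

lemma sg_cons₂ (i j : Fin 3) (w : List (Fin 3)) :
    sg K (i :: j :: w) = sg K [i] * sg K (j :: w) := sg_cons K i (j :: w)

def dW : List (Fin 3) → M K
  | [] => 0
  | i :: w =>
    if i = 0 then sg K [0] * dW w
    else if i = 1 then sg K [1] * dW w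
    else (sg K [0, 1] - sg K [1, 0]) * sg K w - sg K [2] * dW w

@[simp] lemma dW_nil : dW K [] = 0 := by rw [dW.eq_def]
@[simp] lemma dW_x (w : List (Fin 3)) : dW K (0 :: w) = sg K [0] * dW K w := by
  rw [dW.eq_def]; norm_num [Fin.ext_iff]
@[simp] lemma dW_y (w : List (Fin 3)) : dW K (1 :: w) = sg K [1] * dW K w := by
  rw [dW.eq_def]; norm_num [Fin.ext_iff]
@[simp] lemma dW_z (w : List (Fin 3)) :
    dW K (2 :: w) = (sg K [0, 1] - sg K [1, 0]) * sg K w - sg K [2] * dW K w := by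
  rw [dW.eq_def]; norm_num [Fin.ext_iff]

def hW : List (Fin 3) → M K
  | [] => 0
  | i :: w =>
    if i = 0 then sg K [0] * hW w
    else if i = 1 then
      match w with
      | [] => 0
      | j :: w' =>
        if j = 0 then sg K (2 :: w')
        else if j = 1 then sg K [1] * hW (1 :: w')
        else 0
    else 0
  termination_by w => w.length
  decreasing_by all_goals simp [List.length]

@[simp] lemma hW_nil : hW K [] = 0 := by rw [hW.eq_def]
@[simp] lemma hW_x (w : List (Fin 3)) : hW K (0 :: w) = sg K [0] * hW K w := by
  rw [hW.eq_def]; rfl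
@[simp] lemma hW_z (w : List (Fin 3)) : hW K (2 :: w) = 0 := by
  rw [hW.eq_def]; rfl
@[simp] lemma hW_y1 : hW K [1] = 0 := by rw [hW.eq_def]; norm_num [Fin.ext_iff]
@[simp] lemma hW_yx (w : List (Fin 3)) : hW K (1 :: 0 :: w) = sg K (2 :: w) := by
  rw [hW.eq_def]; norm_num [Fin.ext_iff]
@[simp] lemma hW_yy (w : List (Fin 3)) : hW K (1 :: 1 :: w) = sg K [1] * hW K (1 :: w) := by
  rw [hW.eq_def]; norm_num [Fin.ext_iff]
@[simp] lemma hW_yz (w : List (Fin 3)) : hW K (1 :: 2 :: w) = 0 := by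
  rw [hW.eq_def]; norm_num [Fin.ext_iff]

def tW : List (Fin 3) → M K
  | [] => 0
  | i :: w =>
    if i = 0 then sg K [0] * tW w
    else if i = 1 then
      match w with
      | [] => 0
      | j :: w' =>
        if j = 0 then sg K (0 :: 1 :: w')
        else if j = 1 then sg K [1] * tW (1 :: w')
        else sg K (2 :: 1 :: w')
    else sg K [0] * hW K (1 :: w)
  termination_by w => w.length
  decreasing_by all_goals simp [List.length]

@[simp] lemma tW_nil : tW K [] = 0 := by rw [tW.eq_def]
@[simp] lemma tW_x (w : List (Fin 3)) : tW K (0 :: w) = sg K [0] * tW K w := by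
  rw [tW.eq_def]; rfl
@[simp] lemma tW_z (w : List (Fin 3)) : tW K (2 :: w) = sg K [0] * hW K (1 :: w) := by
  rw [tW.eq_def]; rfl
@[simp] lemma tW_y1 : tW K [1] = 0 := by rw [tW.eq_def]; norm_num [Fin.ext_iff]
@[simp] lemma tW_yx (w : List (Fin 3)) : tW K (1 :: 0 :: w) = sg K (0 :: 1 :: w) := by
  rw [tW.eq_def]; norm_num [Fin.ext_iff]
@[simp] lemma tW_yy (w : List (Fin 3)) : tW K (1 :: 1 :: w) = sg K [1] * tW K (1 :: w) := by
  rw [tW.eq_def]; norm_num [Fin.ext_iff]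
@[simp] lemma tW_yz (w : List (Fin 3)) : tW K (1 :: 2 :: w) = sg K (2 :: 1 :: w) := by
  rw [tW.eq_def]; norm_num [Fin.ext_iff]

def isY : List (Fin 3) → Prop
  | [] => True
  | i :: w => i = 1 ∧ isY w

def isNormal : List (Fin 3) → Prop
  | [] => True
  | i :: w => if i = 0 then isNormal w else (i = 1 ∧ isY w)

instance isY_dec : DecidablePred isY := fun w => by
  induction w with
  | nil => exact .isTrue trivial
  | cons a w ih => exact instDecidableAnd (dq := ih)

instance isNormal_dec : DecidablePred isNormal := fun w => by
  induction w with
  | nil => exact .isTrue trivial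
  | cons a w ih =>
    rw [isNormal]
    exact instDecidableIte

@[simp] lemma isY_nil : isY ([] : List (Fin 3)) = True := rfl
@[simp] lemma isY_cons (i : Fin 3) (w : List (Fin 3)) : isY (i :: w) ↔ (i = 1 ∧ isY w) :=
  Iff.rfl
@[simp] lemma isNormal_nil : isNormal ([] : List (Fin 3)) = True := rfl
@[simp] lemma isNormal_x (w : List (Fin 3)) : isNormal (0 :: w) ↔ isNormal w := by
  rw [isNormal]; norm_num
@[simp] lemma isNormal_y (w : List (Fin 3)) : isNormal (1 :: w) ↔ isY w := by
  rw [isNormal]; norm_num [Fin.ext_iff]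
@[simp] lemma isNormal_z (w : List (Fin 3)) : ¬ isNormal (2 :: w) := by
  rw [isNormal]; norm_num [Fin.ext_iff]

def eW (w : List (Fin 3)) : M K := if isNormal w then sg K w else 0

@[simp] lemma eW_nil : eW K [] = 1 := by simp [eW]
@[simp] lemma eW_x (w : List (Fin 3)) : eW K (0 :: w) = sg K [0] * eW K w := by
  by_cases h : isNormal w
  · rw [eW, if_pos ((isNormal_x w).2 h), eW, if_pos h, sg_cons]
  · rw [eW, if_neg (fun hc => h ((isNormal_x w).1 hc)), eW, if_neg h, mul_zero]
@[simp] lemma eW_z (w : List (Fin 3)) : eW K (2 :: w) = 0 := by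
  rw [eW, if_neg (isNormal_z w)]
@[simp] lemma eW_y1 : eW K [1] = sg K [1] := by
  rw [eW, if_pos]; simp
@[simp] lemma eW_yx (w : List (Fin 3)) : eW K (1 :: 0 :: w) = 0 := by
  rw [eW, if_neg]; simp [Fin.ext_iff]
@[simp] lemma eW_yz (w : List (Fin 3)) : eW K (1 :: 2 :: w) = 0 := by
  rw [eW, if_neg]; simp [Fin.ext_iff]
@[simp] lemma eW_yy (w : List (Fin 3)) : eW K (1 :: 1 :: w) = sg K [1] * eW K (1 :: w) := by
  by_cases h : isY w
  · rw [eW, if_pos (by simp [h]), eW, if_pos (by simp [h]), sg_cons]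
  · rw [eW, if_neg (by simp [h]), eW, if_neg (by simp [h]), mul_zero]

def lf (f : List (Fin 3) → M K) : M K →ₗ[K] M K :=
  (Finsupp.lsum K fun w => LinearMap.toSpanSingleton K (M K) (f (FreeMonoid.toList w))) ∘ₗ
    (MonoidAlgebra.coeffLinearEquiv K).toLinearMap

lemma lf_single (f : List (Fin 3) → M K) (a : FreeMonoid (Fin 3)) (b : K) :
    lf K f (MonoidAlgebra.single a b) = b • f (FreeMonoid.toList a) := by
  show (Finsupp.lsum K fun w => LinearMap.toSpanSingleton K (M K) (f (FreeMonoid.toList w)))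
    (Finsupp.single a b) = _
  rw [Finsupp.lsum_single, LinearMap.toSpanSingleton_apply]

lemma lf_sg (f : List (Fin 3) → M K) (w : List (Fin 3)) : lf K f (sg K w) = f w := by
  rw [sg, lf_single, one_smul]; rfl

lemma comp_ext {V : Type*} [AddCommMonoid V] [Module K V] {F G : M K →ₗ[K] V}
    (h : ∀ w : List (Fin 3), F (sg K w) = G (sg K w)) : F = G := by
  apply MonoidAlgebra.lhom_ext'
  intro a
  apply LinearMap.ext
  intro b
  show F (MonoidAlgebra.single a b) = G (MonoidAlgebra.single a b)
  have e : (MonoidAlgebra.single a b : M K) = b • sg K (FreeMonoid.toList a) := by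
    rw [sg, MonoidAlgebra.smul_single, smul_eq_mul, mul_one, FreeMonoid.ofList_toList]
  rw [e, map_smul, map_smul]
  exact congrArg _ (h _)

lemma lf_push (f : List (Fin 3) → M K) (u : List (Fin 3)) (G : M K →ₗ[K] M K)
    (h : ∀ w, f (u ++ w) = G (sg K w)) (m : M K) : lf K f (sg K u * m) = G m := by
  have e : (lf K f) ∘ₗ (LinearMap.mulLeft K (sg K u)) = G := by
    apply comp_ext
    intro w
    simp only [LinearMap.comp_apply, LinearMap.mulLeft_apply, ← sg_append, lf_sg]
    exact h w
  exact DFunLike.congr_fun e m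

abbrev Dop : M K →ₗ[K] M K := lf K (dW K)
abbrev Hop : M K →ₗ[K] M K := lf K (hW K)
abbrev Top : M K →ₗ[K] M K := lf K (tW K)
abbrev Eop : M K →ₗ[K] M K := lf K (eW K)

@[simp] lemma D_sg (w : List (Fin 3)) : Dop K (sg K w) = dW K w := lf_sg K _ w
@[simp] lemma H_sg (w : List (Fin 3)) : Hop K (sg K w) = hW K w := lf_sg K _ w
@[simp] lemma T_sg (w : List (Fin 3)) : Top K (sg K w) = tW K w := lf_sg K _ w
@[simp] lemma E_sg (w : List (Fin 3)) : Eop K (sg K w) = eW K w := lf_sg K _ w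

@[simp] lemma D_x (m : M K) : Dop K (sg K [0] * m) = sg K [0] * Dop K m :=
  lf_push K (dW K) [0] ((LinearMap.mulLeft K (sg K [0])) ∘ₗ Dop K)
    (fun w => by simp) m

@[simp] lemma D_y (m : M K) : Dop K (sg K [1] * m) = sg K [1] * Dop K m :=
  lf_push K (dW K) [1] ((LinearMap.mulLeft K (sg K [1])) ∘ₗ Dop K)
    (fun w => by simp) m

@[simp] lemma D_z (m : M K) :
    Dop K (sg K [2] * m) = (sg K [0, 1] - sg K [1, 0]) * m - sg K [2] * Dop K m :=
  lf_push K (dW K) [2]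
    ((LinearMap.mulLeft K (sg K [0, 1] - sg K [1, 0]))
      - (LinearMap.mulLeft K (sg K [2])) ∘ₗ Dop K)
    (fun w => by simp) m

@[simp] lemma H_x (m : M K) : Hop K (sg K [0] * m) = sg K [0] * Hop K m :=
  lf_push K (hW K) [0] ((LinearMap.mulLeft K (sg K [0])) ∘ₗ Hop K)
    (fun w => by simp) m

@[simp] lemma H_z (m : M K) : Hop K (sg K [2] * m) = 0 :=
  lf_push K (hW K) [2] 0 (fun w => by simp) m

@[simp] lemma H_yx (m : M K) : Hop K (sg K [1, 0] * m) = sg K [2] * m :=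
  lf_push K (hW K) [1, 0] (LinearMap.mulLeft K (sg K [2]))
    (fun w => by simpa using sg_cons K 2 w) m

lemma H_yy (m : M K) : Hop K (sg K [1, 1] * m) = sg K [1] * Hop K (sg K [1] * m) :=
  lf_push K (hW K) [1, 1]
    ((LinearMap.mulLeft K (sg K [1])) ∘ₗ (Hop K) ∘ₗ (LinearMap.mulLeft K (sg K [1])))
    (fun w => by
      show hW K ((1 : Fin 3) :: (1 : Fin 3) :: w) = sg K [1] * Hop K (sg K [1] * sg K w)
      rw [← sg_cons, H_sg, hW_yy]) m

@[simp] lemma H_yz (m : M K) : Hop K (sg K [1, 2] * m) = 0 :=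
  lf_push K (hW K) [1, 2] 0 (fun w => by simp) m

@[simp] lemma sg_mul_sg (u v : List (Fin 3)) : sg K u * sg K v = sg K (u ++ v) :=
  (sg_append K u v).symm

@[simp] lemma fm0 (h : (0:ℕ) < 3) : (⟨0, h⟩ : Fin 3) = 0 := rfl
@[simp] lemma fm1 (h : (1:ℕ) < 3) : (⟨1, h⟩ : Fin 3) = 1 := rfl
@[simp] lemma fm2 (h : (2:ℕ) < 3) : (⟨2, h⟩ : Fin 3) = 2 := rfl

@[simp] lemma H_yx' (m : M K) : Hop K (sg K [1] * (sg K [0] * m)) = sg K [2] * m := by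
  rw [← mul_assoc, sg_mul_sg]
  exact H_yx K m

@[simp] lemma H_yy' (m : M K) :
    Hop K (sg K [1] * (sg K [1] * m)) = sg K [1] * Hop K (sg K [1] * m) := by
  rw [← mul_assoc, sg_mul_sg]
  exact H_yy K m

@[simp] lemma H_yz' (m : M K) : Hop K (sg K [1] * (sg K [2] * m)) = 0 := by
  rw [← mul_assoc, sg_mul_sg]
  exact H_yz K m

lemma star : ∀ w : List (Fin 3),
    Dop K (hW K w) + Hop K (dW K w) + sg K w = tW K w + eW K w := by
  have main : ∀ n (w : List (Fin 3)), w.length ≤ n →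
      Dop K (hW K w) + Hop K (dW K w) + sg K w = tW K w + eW K w := by
    intro n
    induction n with
    | zero =>
      intro w hw
      have : w = [] := List.eq_nil_of_length_eq_zero (Nat.le_zero.mp hw)
      subst this
      simp
    | succ n ih =>
      intro w hw
      match w with
      | [] => simp
      | i :: w' =>
        have hl : w'.length ≤ n := by
          have := hw; simp only [List.length_cons] at this; omega
        fin_cases i <;> simp only [fm0, fm1, fm2]
        · -- head x
          have iha := ih w' hl
          rw [hW_x, dW_x, tW_x, eW_x, D_x, H_x, sg_cons K 0 w',
            ← mul_add, ← mul_add, iha, mul_add]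
        · -- head y
          match w' with
          | [] => simp
          | j :: w'' =>
            have hl2 : ((1 : Fin 3) :: w'').length ≤ n := by
              have := hw; simp only [List.length_cons] at this
              simp only [List.length_cons]; omega
            fin_cases j <;> simp only [fm0, fm1, fm2]
            · -- y x
              simp only [hW_yx, dW_y, dW_x, dW_z, tW_yx, eW_yx, D_sg, H_yx',
                mul_sub, sub_mul, sg_mul_sg, List.cons_append, List.nil_append, map_sub]
              abel
            · -- y y
              have iha := ih ((1 : Fin 3) :: w'') hl2
              rw [hW_yy, tW_yy, eW_yy, dW_y, dW_y, D_y, H_yy', ← dW_y,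
                sg_cons K 1 ((1:Fin 3) :: w''), ← mul_add, ← mul_add, iha, mul_add]
            · -- y z
              simp only [hW_yz, dW_y, dW_z, tW_yz, eW_yz, map_zero, map_sub, map_add,
                mul_sub, sub_mul, sg_mul_sg, List.cons_append, List.nil_append, D_sg, H_sg,
                hW_yx, hW_yy, hW_yz, H_yz', H_yx', H_yy', zero_add, add_zero]
              abel
        · -- head z
          simp only [hW_z, dW_z, tW_z, eW_z, map_zero, map_sub, map_add, sub_mul, mul_sub,
            sg_mul_sg, List.cons_append, List.nil_append, D_sg, H_sg, H_z, hW_x, zero_add,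
            add_zero]
          simp only [hW_yx]
          abel
  exact fun w => main w.length w le_rfl

lemma dd : ∀ w : List (Fin 3), Dop K (dW K w) = 0 := by
  have main : ∀ n (w : List (Fin 3)), w.length ≤ n → Dop K (dW K w) = 0 := by
    intro n
    induction n with
    | zero =>
      intro w hw
      have : w = [] := List.eq_nil_of_length_eq_zero (Nat.le_zero.mp hw)
      subst this; simp
    | succ n ih =>
      intro w hw
      match w with
      | [] => simp
      | i :: w' =>
        have hl : w'.length ≤ n := by
          have := hw; simp only [List.length_cons] at this; omega
        have iha := ih w' hl
        fin_cases i <;> simp only [fm0, fm1, fm2]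
        · simp [iha]
        · simp [iha]
        · simp only [dW_z, map_sub, map_add, sub_mul, sg_mul_sg, List.cons_append,
            List.nil_append, D_sg, D_z, dW_x, dW_y, iha, mul_zero, sub_mul]
          simp only [sg_cons₂ K 0 1 [], sg_cons₂ K 1 0 [], sg_nil, mul_assoc]
          abel
  exact fun w => main w.length w le_rfl

/-! ### Counts and measures -/

def cx (w : List (Fin 3)) : ℕ := w.count 0
def cy (w : List (Fin 3)) : ℕ := w.count 1
def cz (w : List (Fin 3)) : ℕ := w.count 2

@[simp] lemma cx_nil : cx ([] : List (Fin 3)) = 0 := rfl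
@[simp] lemma cy_nil : cy ([] : List (Fin 3)) = 0 := rfl
@[simp] lemma cz_nil : cz ([] : List (Fin 3)) = 0 := rfl
@[simp] lemma cx_cons (i : Fin 3) (w : List (Fin 3)) :
    cx (i :: w) = cx w + (if i = 0 then 1 else 0) := by simp [cx, List.count_cons]
@[simp] lemma cy_cons (i : Fin 3) (w : List (Fin 3)) :
    cy (i :: w) = cy w + (if i = 1 then 1 else 0) := by simp [cy, List.count_cons]
@[simp] lemma cz_cons (i : Fin 3) (w : List (Fin 3)) :
    cz (i :: w) = cz w + (if i = 2 then 1 else 0) := by simp [cz, List.count_cons]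

def m1 : List (Fin 3) → ℕ
  | [] => 0
  | i :: w => (if i = 1 then cx w else 0) + m1 w

def m3 : List (Fin 3) → ℕ
  | [] => 0
  | i :: w => (if i = 1 then cz w else 0) + (if i = 2 then cx w else 0) + m3 w

@[simp] lemma m1_nil : m1 ([] : List (Fin 3)) = 0 := rfl
@[simp] lemma m3_nil : m3 ([] : List (Fin 3)) = 0 := rfl
@[simp] lemma m1_cons (i : Fin 3) (w : List (Fin 3)) :
    m1 (i :: w) = (if i = 1 then cx w else 0) + m1 w := rfl
@[simp] lemma m3_cons (i : Fin 3) (w : List (Fin 3)) :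
    m3 (i :: w) = (if i = 1 then cz w else 0) + (if i = 2 then cx w else 0) + m3 w := rfl

/-! ### Supported submodules -/

def SpanW (P : List (Fin 3) → Prop) : Submodule K (M K) :=
  (Finsupp.supported K K {a : FreeMonoid (Fin 3) | P (FreeMonoid.toList a)}).comap
    (MonoidAlgebra.coeffLinearEquiv K).toLinearMap

lemma sg_mem_SpanW {P : List (Fin 3) → Prop} (w : List (Fin 3)) (h : P w) :
    sg K w ∈ SpanW K P := by
  rw [SpanW, Submodule.mem_comap, Finsupp.mem_supported]
  intro a ha
  have : a = FreeMonoid.ofList w := by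
    have := Finsupp.support_single_subset (a := FreeMonoid.ofList w) (b := (1:K)) ha
    simpa using this
  subst this
  exact h

lemma spanW_le {P Q : List (Fin 3) → Prop} (h : ∀ w, P w → Q w) :
    SpanW K P ≤ SpanW K Q :=
  Submodule.comap_mono (Finsupp.supported_mono (fun _ ha => h _ ha))

lemma mem_SpanW_supp {P : List (Fin 3) → Prop} {m : M K} (hm : m ∈ SpanW K P) :
    ∀ a ∈ m.coeff.support, P (FreeMonoid.toList a) := by
  rw [SpanW, Submodule.mem_comap, Finsupp.mem_supported] at hm
  exact fun a ha => hm ha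

lemma mem_SpanW_of_supp {P : List (Fin 3) → Prop} {m : M K}
    (hm : ∀ a ∈ m.coeff.support, P (FreeMonoid.toList a)) : m ∈ SpanW K P := by
  rw [SpanW, Submodule.mem_comap, Finsupp.mem_supported]
  exact fun a ha => hm a ha

lemma single_eq_smul_sg (a : FreeMonoid (Fin 3)) (b : K) :
    (MonoidAlgebra.single a b : M K) = b • sg K (FreeMonoid.toList a) := by
  rw [sg, MonoidAlgebra.smul_single, smul_eq_mul, mul_one, FreeMonoid.ofList_toList]

lemma SpanW_mem_map {P : List (Fin 3) → Prop} {V : Type*} [AddCommGroup V] [Module K V]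
    (L : M K →ₗ[K] V) (N : Submodule K V)
    (h : ∀ w, P w → L (sg K w) ∈ N) {m : M K} (hm : m ∈ SpanW K P) : L m ∈ N := by
  classical
  have hsum : m = ∑ a ∈ m.coeff.support, MonoidAlgebra.single a (m.coeff a) := by
    exact (MonoidAlgebra.sum_coeff_single m).symm
  rw [hsum, map_sum]
  refine Submodule.sum_mem N ?_
  intro a ha
  rw [single_eq_smul_sg, map_smul]
  exact N.smul_mem _ (h _ (mem_SpanW_supp K hm a ha))

lemma lf_mem_SpanW {P : List (Fin 3) → Prop} {f : List (Fin 3) → M K}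
    (N : Submodule K (M K)) (h : ∀ w, P w → f w ∈ N) {m : M K}
    (hm : m ∈ SpanW K P) : lf K f m ∈ N :=
  SpanW_mem_map K (lf K f) N (fun w hw => by rw [lf_sg]; exact h w hw) hm

lemma mul_mem_SpanW {P Q : List (Fin 3) → Prop} (i : Fin 3)
    (h : ∀ w, P w → Q (i :: w)) {m : M K} (hm : m ∈ SpanW K P) :
    sg K [i] * m ∈ SpanW K Q :=
  SpanW_mem_map K (LinearMap.mulLeft K (sg K [i])) (SpanW K Q)
    (fun w hw => by
      simp only [LinearMap.mulLeft_apply, sg_mul_sg, List.cons_append, List.nil_append]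
      exact sg_mem_SpanW K _ (h w hw)) hm

lemma mem_SpanW_True (m : M K) : m ∈ SpanW K (fun _ => True) :=
  mem_SpanW_of_supp K (fun _ _ => trivial)

/-! ### Grading lemmas -/

lemma dW_mem (w : List (Fin 3)) : dW K w ∈ SpanW K (fun v => cz v + 1 = cz w) := by
  induction w with
  | nil => simp only [dW_nil]; exact zero_mem _
  | cons i w ih =>
    fin_cases i <;> simp only [fm0, fm1, fm2, dW_x, dW_y, dW_z]
    · exact mul_mem_SpanW K 0 (fun v hv => by simp at hv ⊢; omega) ih
    · exact mul_mem_SpanW K 1 (fun v hv => by simp at hv ⊢; omega) ih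
    · refine sub_mem ?_ (mul_mem_SpanW K 2 (fun v hv => by simp at hv ⊢; omega) ih)
      rw [sub_mul]
      refine sub_mem ?_ ?_ <;>
        · rw [sg_mul_sg, List.cons_append, List.cons_append, List.nil_append]
          exact sg_mem_SpanW K _ (by simp)

lemma hW_mem : ∀ w : List (Fin 3), hW K w ∈ SpanW K (fun v => cz v = cz w + 1) := by
  have main : ∀ n (w : List (Fin 3)), w.length ≤ n →
      hW K w ∈ SpanW K (fun v => cz v = cz w + 1) := by
    intro n
    induction n with
    | zero =>
      intro w hw
      have : w = [] := List.eq_nil_of_length_eq_zero (Nat.le_zero.mp hw)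
      subst this; simp only [hW_nil]; exact zero_mem _
    | succ n ih =>
      intro w hw
      match w with
      | [] => simp only [hW_nil]; exact zero_mem _
      | i :: w' =>
        have hl : w'.length ≤ n := by
          have := hw; simp only [List.length_cons] at this; omega
        fin_cases i <;> simp only [fm0, fm1, fm2, hW_x, hW_z]
        · exact mul_mem_SpanW K 0 (fun v hv => by simp at hv ⊢; omega) (ih w' hl)
        · match w' with
          | [] => simp only [hW_y1]; exact zero_mem _
          | j :: w'' =>
            have hl2 : ((1 : Fin 3) :: w'').length ≤ n := by
              have := hw; simp only [List.length_cons] at this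
              simp only [List.length_cons]; omega
            fin_cases j <;> simp only [fm0, fm1, fm2, hW_yx, hW_yy, hW_yz]
            · exact sg_mem_SpanW K _ (by simp)
            · exact mul_mem_SpanW K 1 (fun v hv => by simp at hv ⊢; omega) (ih _ hl2)
            · exact zero_mem _
        · exact zero_mem _
  exact fun w => main w.length w le_rfl

lemma eW_mem (w : List (Fin 3)) : eW K w ∈ SpanW K isNormal := by
  rw [eW]
  split
  · exact sg_mem_SpanW K _ ‹_›
  · exact zero_mem _

lemma isY_counts {w : List (Fin 3)} (h : isY w) : cx w = 0 ∧ cz w = 0 := by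
  induction w with
  | nil => simp
  | cons i w ih =>
    obtain ⟨h1, h2⟩ := (isY_cons i w).mp h
    subst h1
    have := ih h2
    simp [this]

lemma isNormal_cz {w : List (Fin 3)} (h : isNormal w) : cz w = 0 := by
  induction w with
  | nil => simp
  | cons i w ih =>
    fin_cases i
    · have := ih ((isNormal_x w).mp h)
      simpa using this
    · have := (isY_counts ((isNormal_y w).mp h)).2
      simpa using this
    · exact absurd h (isNormal_z w)

lemma dW_zero_of_cz {w : List (Fin 3)} (h : cz w = 0) : dW K w = 0 := by
  induction w with
  | nil => simp
  | cons i w ih =>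
    fin_cases i
    · simp only [fm0, dW_x]
      rw [ih (by simpa using h), mul_zero]
    · simp only [fm1, dW_y]
      rw [ih (by simpa using h), mul_zero]
    · exfalso; simp at h

/-! ### The decrease lemmas -/

lemma aux_hW : ∀ w : List (Fin 3), hW K (1 :: w) ∈ SpanW K (fun v =>
    cx v + 1 = cx w ∧ cy v = cy w ∧ cz v = cz w + 1 ∧
    (m1 v < m1 w ∨ (m1 v = m1 w ∧ m3 v < m3 w + cx w))) := by
  have main : ∀ n (w : List (Fin 3)), w.length ≤ n → hW K (1 :: w) ∈ SpanW K (fun v =>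
      cx v + 1 = cx w ∧ cy v = cy w ∧ cz v = cz w + 1 ∧
      (m1 v < m1 w ∨ (m1 v = m1 w ∧ m3 v < m3 w + cx w))) := by
    intro n
    induction n with
    | zero =>
      intro w hw
      have : w = [] := List.eq_nil_of_length_eq_zero (Nat.le_zero.mp hw)
      subst this; simp only [hW_y1]; exact zero_mem _
    | succ n ih =>
      intro w hw
      match w with
      | [] => simp only [hW_y1]; exact zero_mem _
      | j :: w' =>
        have hl : w'.length ≤ n := by
          have := hw; simp only [List.length_cons] at this; omega
        fin_cases j <;> simp only [fm0, fm1, fm2, hW_yx, hW_yy, hW_yz]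
        · exact sg_mem_SpanW K _ (by simp <;> omega)
        · refine mul_mem_SpanW K 1 (fun v hv => ?_) (ih w' hl)
          simp at hv ⊢
          omega
        · exact zero_mem _
  exact fun w => main w.length w le_rfl

lemma tdec : ∀ w : List (Fin 3), tW K w ∈ SpanW K (fun v =>
    cx v = cx w ∧ cy v = cy w ∧ cz v = cz w ∧
    (m1 v < m1 w ∨ (m1 v = m1 w ∧ m3 v < m3 w))) := by
  have main : ∀ n (w : List (Fin 3)), w.length ≤ n → tW K w ∈ SpanW K (fun v =>
      cx v = cx w ∧ cy v = cy w ∧ cz v = cz w ∧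
      (m1 v < m1 w ∨ (m1 v = m1 w ∧ m3 v < m3 w))) := by
    intro n
    induction n with
    | zero =>
      intro w hw
      have : w = [] := List.eq_nil_of_length_eq_zero (Nat.le_zero.mp hw)
      subst this; simp only [tW_nil]; exact zero_mem _
    | succ n ih =>
      intro w hw
      match w with
      | [] => simp only [tW_nil]; exact zero_mem _
      | i :: w' =>
        have hl : w'.length ≤ n := by
          have := hw; simp only [List.length_cons] at this; omega
        fin_cases i <;> simp only [fm0, fm1, fm2, tW_x, tW_z]
        · refine mul_mem_SpanW K 0 (fun v hv => ?_) (ih w' hl)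
          simp at hv ⊢
          omega
        · match w' with
          | [] => simp only [tW_y1]; exact zero_mem _
          | j :: w'' =>
            have hl2 : ((1 : Fin 3) :: w'').length ≤ n := by
              have := hw; simp only [List.length_cons] at this
              simp only [List.length_cons]; omega
            fin_cases j <;> simp only [fm0, fm1, fm2, tW_yx, tW_yy, tW_yz]
            · exact sg_mem_SpanW K _ (by simp <;> omega)
            · refine mul_mem_SpanW K 1 (fun v hv => ?_) (ih _ hl2)
              simp at hv ⊢
              omega
            · exact sg_mem_SpanW K _ (by simp <;> omega)
        · refine mul_mem_SpanW K 0 (fun v hv => ?_) (aux_hW K w')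
          simp at hv ⊢
          omega
  exact fun w => main w.length w le_rfl

/-! ### The key homotopy lemma -/

def Zk (k : ℕ) : Submodule K (M K) := SpanW K (fun w => cz w = k)
def NS : Submodule K (M K) := SpanW K isNormal

lemma opstar (m : M K) :
    Dop K (Hop K m) + Hop K (Dop K m) + m = Top K m + Eop K m := by
  have e : (Dop K) ∘ₗ (Hop K) + (Hop K) ∘ₗ (Dop K) + LinearMap.id = Top K + Eop K := by
    apply comp_ext
    intro w
    simpa using star K w
  exact DFunLike.congr_fun e m

lemma DD (m : M K) : Dop K (Dop K m) = 0 := by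
  have e : (Dop K) ∘ₗ (Dop K) = (0 : M K →ₗ[K] M K) := by
    apply comp_ext
    intro w
    simpa using dd K w
  exact DFunLike.congr_fun e m

lemma D_NS {s : M K} (hs : s ∈ NS K) : Dop K s = 0 := by
  have : Dop K s ∈ (⊥ : Submodule K (M K)) := by
    refine lf_mem_SpanW K ⊥ (fun w hw => ?_) hs
    rw [Submodule.mem_bot]
    exact dW_zero_of_cz K (isNormal_cz hw)
  simpa using this

lemma Eop_mem_NS (m : M K) : Eop K m ∈ NS K :=
  lf_mem_SpanW K (NS K) (fun w _ => eW_mem K w) (mem_SpanW_True K m)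

lemma Hop_Zk {m : M K} {k : ℕ} (hm : m ∈ Zk K k) : Hop K m ∈ Zk K (k + 1) := by
  refine lf_mem_SpanW K (Zk K (k+1)) (fun w hw => ?_) hm
  exact spanW_le K (fun v hv => by rw [hv, hw]) (hW_mem K w)

lemma Dop_Zk {m : M K} {k : ℕ} (hm : m ∈ Zk K (k + 1)) : Dop K m ∈ Zk K k := by
  refine lf_mem_SpanW K (Zk K k) (fun w hw => ?_) hm
  exact spanW_le K (fun v hv => by omega) (dW_mem K w)

lemma Top_Zk {m : M K} {k : ℕ} (hm : m ∈ Zk K k) : Top K m ∈ Zk K k := by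
  refine lf_mem_SpanW K (Zk K k) (fun w hw => ?_) hm
  exact spanW_le K (fun v hv => by rw [hv.2.2.1, hw]) (tdec K w)

def mu2 (a : FreeMonoid (Fin 3)) : Lex (ℕ × ℕ) :=
  toLex (m1 (FreeMonoid.toList a), m3 (FreeMonoid.toList a))

def nu (m : M K) : WithBot (Lex (ℕ × ℕ)) :=
  m.coeff.support.sup (fun a => ((mu2 a : Lex (ℕ × ℕ)) : WithBot (Lex (ℕ × ℕ))))

lemma nu_lt {m m' : M K} (hm : m ≠ 0)
    (h : ∀ a ∈ m'.coeff.support, ∃ b ∈ m.coeff.support, mu2 a < mu2 b) : nu K m' < nu K m := by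
  have hle : ∀ b ∈ m.coeff.support, ((mu2 b : Lex (ℕ × ℕ)) : WithBot (Lex (ℕ × ℕ))) ≤ nu K m :=
    fun b hb => Finset.le_sup (f := fun a => ((mu2 a : Lex (ℕ × ℕ)) : WithBot (Lex (ℕ × ℕ)))) hb
  have hbot : ⊥ < nu K m := by
    obtain ⟨b, hb⟩ := Finsupp.support_nonempty_iff.mpr (mt MonoidAlgebra.coeff_eq_zero.mp hm)
    exact lt_of_lt_of_le (WithBot.bot_lt_coe (mu2 b)) (hle b hb)
  rw [nu, Finset.sup_lt_iff hbot]
  intro a ha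
  obtain ⟨b, hb, hab⟩ := h a ha
  exact lt_of_lt_of_le (WithBot.coe_lt_coe.mpr hab) (hle b hb)

lemma Top_supp {m : M K} :
    ∀ a ∈ (Top K m).coeff.support, ∃ b ∈ m.coeff.support, mu2 a < mu2 b := by
  have hT : Top K m ∈ SpanW K (fun v => ∃ b ∈ m.coeff.support,
      (m1 v < m1 (FreeMonoid.toList b) ∨
        (m1 v = m1 (FreeMonoid.toList b) ∧ m3 v < m3 (FreeMonoid.toList b)))) := by
    refine lf_mem_SpanW K _ (fun w hw => ?_)
      (mem_SpanW_of_supp K (fun a ha => ha) (P := fun w => FreeMonoid.ofList w ∈ m.coeff.support))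
    refine spanW_le K (fun v hv => ?_) (tdec K w)
    exact ⟨FreeMonoid.ofList w, hw, by simpa using hv.2.2.2⟩
  intro a ha
  obtain ⟨b, hb, hlt⟩ := mem_SpanW_supp K hT a ha
  refine ⟨b, hb, ?_⟩
  rw [mu2, mu2, Prod.Lex.lt_iff]
  exact hlt

lemma key : ∀ (m : M K), Dop K m = 0 → ∀ k, m ∈ Zk K k →
    ∃ c ∈ Zk K (k + 1), m - Dop K c ∈ NS K := by
  have wf : WellFounded (fun x y : M K => nu K x < nu K y) :=
    InvImage.wf (nu K) wellFounded_lt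
  intro m
  refine wf.induction
    (C := fun m => Dop K m = 0 → ∀ k, m ∈ Zk K k →
      ∃ c ∈ Zk K (k + 1), m - Dop K c ∈ NS K) m ?_
  intro m IH hD k hZ
  by_cases h0 : m = 0
  · refine ⟨0, zero_mem _, ?_⟩
    rw [h0, map_zero, sub_zero]
    exact zero_mem _
  · set m' := Top K m with hm'
    have hstar := opstar K m
    rw [hD, map_zero, add_zero] at hstar
    -- hstar : Dop (Hop m) + m = Top m + Eop m
    have hmeq : m' = Dop K (Hop K m) + m - Eop K m := by
      rw [hm']
      rw [eq_sub_iff_add_eq, ← hstar]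
    have hD' : Dop K m' = 0 := by
      rw [hmeq, map_sub, map_add, DD, hD, D_NS K (Eop_mem_NS K m)]
      simp
    have hZ' : m' ∈ Zk K k := Top_Zk K hZ
    have hlt : nu K m' < nu K m := nu_lt K h0 (Top_supp K)
    obtain ⟨c', hc', hNS'⟩ := IH m' hlt hD' k hZ'
    refine ⟨c' - Hop K m, sub_mem hc' (Hop_Zk K hZ), ?_⟩
    have heq : m - Dop K (c' - Hop K m) = (m' - Dop K c') + Eop K m := by
      rw [map_sub, hmeq]
      abel
    rw [heq]
    exact add_mem hNS' (Eop_mem_NS K m)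

/-! ### Interface with the free algebra -/

def Phi : FreeAlgebra K (Fin 3) ≃ₐ[K] M K :=
  FreeAlgebra.equivMonoidAlgebraFreeMonoid (R := K) (X := Fin 3)

lemma Phi_iota (i : Fin 3) : Phi K (FreeAlgebra.ι K i) = sg K [i] := by
  simp only [Phi, FreeAlgebra.equivMonoidAlgebraFreeMonoid, AlgEquiv.ofAlgHom_apply,
    FreeAlgebra.lift_ι_apply]
  rfl

def wprod : List (Fin 3) → FreeAlgebra K (Fin 3)
  | [] => 1
  | i :: w => FreeAlgebra.ι K i * wprod w

@[simp] lemma wprod_nil : wprod K [] = 1 := rfl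
@[simp] lemma wprod_cons (i : Fin 3) (w : List (Fin 3)) :
    wprod K (i :: w) = FreeAlgebra.ι K i * wprod K w := rfl

lemma Phi_wprod (w : List (Fin 3)) : Phi K (wprod K w) = sg K w := by
  induction w with
  | nil => simp
  | cons i w ih => rw [wprod_cons, map_mul, Phi_iota, ih, ← sg_cons]

lemma symm_sg (w : List (Fin 3)) : (Phi K).symm (sg K w) = wprod K w := by
  rw [← Phi_wprod, AlgEquiv.symm_apply_apply]

section Hyps

variable (H : ℕ → Submodule K (FreeAlgebra K (Fin 3)))
    (h1 : (1 : FreeAlgebra K (Fin 3)) ∈ H 0)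
    (hx : FreeAlgebra.ι K (0 : Fin 3) ∈ H 0) (hy : FreeAlgebra.ι K (1 : Fin 3) ∈ H 0)
    (hz : FreeAlgebra.ι K (2 : Fin 3) ∈ H 1)
    (hmul : ∀ m n : ℕ, ∀ a ∈ H m, ∀ b ∈ H n, a * b ∈ H (m + n))

include h1 hx hy hz hmul in
lemma wprod_mem : ∀ w : List (Fin 3), wprod K w ∈ H (cz w) := by
  intro w
  induction w with
  | nil => simpa using h1
  | cons i w ih =>
    fin_cases i
    · have := hmul 0 (cz w) _ hx _ ih
      simpa using this
    · have := hmul 0 (cz w) _ hy _ ih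
      simpa using this
    · have := hmul 1 (cz w) _ hz _ ih
      simp only [fm2, wprod_cons]
      have e : cz ((2 : Fin 3) :: w) = 1 + cz w := by simp; omega
      rw [e]
      exact this

include h1 hx hy hz hmul in
lemma symm_Zk {m : M K} {k : ℕ} (hm : m ∈ Zk K k) : (Phi K).symm m ∈ H k := by
  refine SpanW_mem_map K ((Phi K).symm.toLinearMap) (H k) (fun w hw => ?_) hm
  rw [AlgEquiv.toLinearMap_apply, symm_sg]
  have := wprod_mem K H h1 hx hy hz hmul w
  rwa [hw] at this

end Hyps

/-! ### Graded components -/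

def ZP (j : ℕ) : M K →ₗ[K] M K :=
  lf K (fun w => if cz w = j then sg K w else 0)

lemma ZP_sg (j : ℕ) (w : List (Fin 3)) :
    ZP K j (sg K w) = if cz w = j then sg K w else 0 := lf_sg K _ w

lemma ZP_mem (j : ℕ) (m : M K) : ZP K j m ∈ Zk K j := by
  refine lf_mem_SpanW K (Zk K j) (fun w _ => ?_) (mem_SpanW_True K m)
  split
  · exact sg_mem_SpanW K _ ‹_›
  · exact zero_mem _

lemma m_eq_sum_smul_sg (m : M K) :
    m = ∑ a ∈ m.coeff.support, (m.coeff a) • sg K (FreeMonoid.toList a) := by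
  have h1 : m.coeff.sum (fun a b => MonoidAlgebra.single a b) = m :=
    MonoidAlgebra.sum_coeff_single m
  rw [Finsupp.sum] at h1
  conv_lhs => rw [← h1]
  exact Finset.sum_congr rfl (fun a _ => single_eq_smul_sg K a (m.coeff a))

lemma sum_ZP (J : Finset ℕ) (m : M K)
    (hm : ∀ a ∈ m.coeff.support, cz (FreeMonoid.toList a) ∈ J) :
    ∑ j ∈ J, ZP K j m = m := by
  classical
  calc ∑ j ∈ J, ZP K j m
      = ∑ j ∈ J, ∑ a ∈ m.coeff.support,
          (m.coeff a) • (if cz (FreeMonoid.toList a) = j then sg K (FreeMonoid.toList a) else 0) := by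
        refine Finset.sum_congr rfl fun j _ => ?_
        conv_lhs => rw [m_eq_sum_smul_sg K m]
        rw [map_sum]
        exact Finset.sum_congr rfl fun a _ => by rw [map_smul, ZP_sg]
    _ = ∑ a ∈ m.coeff.support, ∑ j ∈ J,
          (m.coeff a) • (if cz (FreeMonoid.toList a) = j then sg K (FreeMonoid.toList a) else 0) :=
        Finset.sum_comm
    _ = ∑ a ∈ m.coeff.support, (m.coeff a) • sg K (FreeMonoid.toList a) := by
        refine Finset.sum_congr rfl fun a ha => ?_
        rw [← Finset.smul_sum]
        congr 1
        rw [Finset.sum_ite_eq J (cz (FreeMonoid.toList a))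
          (fun _ => sg K (FreeMonoid.toList a))]
        exact if_pos (hm a ha)
    _ = m := (m_eq_sum_smul_sg K m).symm

lemma HsubZ (H : ℕ → Submodule K (FreeAlgebra K (Fin 3)))
    (hinternal : DirectSum.IsInternal H)
    (h1 : (1 : FreeAlgebra K (Fin 3)) ∈ H 0)
    (hx : FreeAlgebra.ι K (0 : Fin 3) ∈ H 0) (hy : FreeAlgebra.ι K (1 : Fin 3) ∈ H 0)
    (hz : FreeAlgebra.ι K (2 : Fin 3) ∈ H 1)
    (hmul : ∀ m n : ℕ, ∀ a ∈ H m, ∀ b ∈ H n, a * b ∈ H (m + n))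
    {a : FreeAlgebra K (Fin 3)} {k : ℕ} (ha : a ∈ H k) : Phi K a ∈ Zk K k := by
  classical
  set m := Phi K a with hmdef
  set J : Finset ℕ := insert k (m.coeff.support.image (fun b => cz (FreeMonoid.toList b))) with hJ
  have hs : ∑ j ∈ J, ZP K j m = m := by
    refine sum_ZP K J m (fun b hb => ?_)
    exact Finset.mem_insert_of_mem (Finset.mem_image_of_mem _ hb)
  set v : ℕ → FreeAlgebra K (Fin 3) := fun j => (Phi K).symm (ZP K j m) with hv
  have hvH : ∀ j, v j ∈ H j := fun j =>
    symm_Zk K H h1 hx hy hz hmul (ZP_mem K j m)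
  have hsumv : ∑ j ∈ J, v j = a := by
    rw [hv]
    rw [← map_sum, hs, hmdef, AlgEquiv.symm_apply_apply]
  have hind := hinternal.submodule_iSupIndep
  have hzero : ∀ j ∈ J, j ≠ k → v j = 0 := by
    intro j hj hjk
    have hdis := hind j
    refine (Submodule.disjoint_def.mp hdis) (v j) (hvH j) ?_
    have : v j = a - ∑ i ∈ J.erase j, v i := by
      rw [← hsumv, Finset.sum_erase_eq_sub hj]
      abel
    rw [this]
    refine sub_mem ?_ ?_
    · exact Submodule.mem_iSup_of_mem k (Submodule.mem_iSup_of_mem (Ne.symm hjk) ha)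
    · refine Submodule.sum_mem _ (fun i hi => ?_)
      have hij : i ≠ j := Finset.ne_of_mem_erase hi
      exact Submodule.mem_iSup_of_mem i (Submodule.mem_iSup_of_mem hij (hvH i))
  have hmk : m = ZP K k m := by
    conv_lhs => rw [← hs]
    refine Finset.sum_eq_single_of_mem k (Finset.mem_insert_self k _) ?_
    intro j hj hjk
    have : ZP K j m = Phi K (v j) := by
      rw [hv]
      simp only [AlgEquiv.apply_symm_apply]
    rw [this, hzero j hj hjk, map_zero]
  rw [hmk]
  exact ZP_mem K k m

/-! ### The projection to polynomials -/

def piM : M K →ₐ[K] MvPolynomial (Fin 2) K :=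
  (projPoly K).comp ((Phi K).symm : M K →ₐ[K] FreeAlgebra K (Fin 3))

lemma piM_sg (w : List (Fin 3)) : piM K (sg K w) = projPoly K (wprod K w) := by
  rw [piM, AlgHom.comp_apply]
  congr 1
  exact symm_sg K w

@[simp] lemma piM_sg_x : piM K (sg K [0]) = MvPolynomial.X 0 := by
  rw [piM_sg]
  simp [projPoly, FreeAlgebra.lift_ι_apply]

@[simp] lemma piM_sg_y : piM K (sg K [1]) = MvPolynomial.X 1 := by
  rw [piM_sg]
  simp [projPoly, FreeAlgebra.lift_ι_apply]

@[simp] lemma piM_sg_z : piM K (sg K [2]) = 0 := by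
  rw [piM_sg]
  simp [projPoly, FreeAlgebra.lift_ι_apply]

lemma piM_dW (w : List (Fin 3)) : piM K (dW K w) = 0 := by
  induction w with
  | nil => simp
  | cons i w ih =>
    fin_cases i
    · simp only [fm0, dW_x, map_mul, ih, mul_zero]
    · simp only [fm1, dW_y, map_mul, ih, mul_zero]
    · simp only [fm2, dW_z, map_sub, map_mul, ih, mul_zero, sub_zero]
      have e1 : sg K [0, 1] = sg K [0] * sg K [1] := sg_cons K 0 [1]
      have e2 : sg K [1, 0] = sg K [1] * sg K [0] := sg_cons K 1 [0]
      rw [e1, e2, map_mul, map_mul, piM_sg_x, piM_sg_y]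
      ring

lemma piM_Dop (m : M K) : piM K (Dop K m) = 0 := by
  have e : (piM K).toLinearMap ∘ₗ (Dop K) = 0 := by
    apply comp_ext
    intro w
    simpa using piM_dW K w
  exact DFunLike.congr_fun e m

/-! ### The normal-form section of `piM` -/

def nf (mo : Fin 2 →₀ ℕ) : List (Fin 3) :=
  List.replicate (mo 0) 0 ++ List.replicate (mo 1) 1

@[simp] lemma cz_replicate_x (n : ℕ) : cz (List.replicate n (0 : Fin 3)) = 0 := by
  simp [cz, List.count_replicate]
@[simp] lemma cz_replicate_y (n : ℕ) : cz (List.replicate n (1 : Fin 3)) = 0 := by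
  simp [cz, List.count_replicate]
@[simp] lemma cz_append (u v : List (Fin 3)) : cz (u ++ v) = cz u + cz v := by
  simp [cz, List.count_append]

lemma cz_nf (mo : Fin 2 →₀ ℕ) : cz (nf mo) = 0 := by simp [nf]

def rho : MvPolynomial (Fin 2) K →ₗ[K] M K :=
  (MvPolynomial.basisMonomials (Fin 2) K).constr K (fun mo => sg K (nf mo))

lemma rho_monomial (mo : Fin 2 →₀ ℕ) :
    rho K (MvPolynomial.monomial mo 1) = sg K (nf mo) := by
  have : MvPolynomial.monomial mo (1 : K) = MvPolynomial.basisMonomials (Fin 2) K mo := by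
    rw [MvPolynomial.coe_basisMonomials]
  rw [this, rho, Module.Basis.constr_basis]

lemma rho_mem_Zk (p : MvPolynomial (Fin 2) K) : rho K p ∈ Zk K 0 := by
  induction p using MvPolynomial.induction_on' with
  | monomial mo c =>
    have : MvPolynomial.monomial mo c = c • MvPolynomial.monomial mo (1:K) := by
      rw [MvPolynomial.smul_monomial, smul_eq_mul, mul_one]
    rw [this, map_smul, rho_monomial]
    exact Submodule.smul_mem _ _ (sg_mem_SpanW K _ (cz_nf mo))
  | add p q hp hq =>
    rw [map_add]
    exact add_mem hp hq

lemma piM_sg_replicate_x (n : ℕ) (w : List (Fin 3)) :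
    piM K (sg K (List.replicate n (0 : Fin 3) ++ w))
      = MvPolynomial.X 0 ^ n * piM K (sg K w) := by
  induction n with
  | zero => simp
  | succ n ih =>
    rw [List.replicate_succ, List.cons_append, sg_cons, map_mul, piM_sg_x, ih, pow_succ]
    ring

lemma piM_sg_replicate_y (n : ℕ) :
    piM K (sg K (List.replicate n (1 : Fin 3))) = MvPolynomial.X 1 ^ n := by
  induction n with
  | zero => simp
  | succ n ih =>
    rw [List.replicate_succ, sg_cons, map_mul, piM_sg_y, ih, pow_succ]
    ring

lemma piM_sg_nf_gen (a b : ℕ) :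
    piM K (sg K (List.replicate a (0 : Fin 3) ++ List.replicate b (1 : Fin 3)))
      = MvPolynomial.monomial (Finsupp.single 0 a + Finsupp.single 1 b) (1 : K) := by
  rw [piM_sg_replicate_x, piM_sg_replicate_y, MvPolynomial.X_pow_eq_monomial,
    MvPolynomial.X_pow_eq_monomial, MvPolynomial.monomial_mul, one_mul]

lemma single_add_single (mo : Fin 2 →₀ ℕ) :
    Finsupp.single (0 : Fin 2) (mo 0) + Finsupp.single (1 : Fin 2) (mo 1) = mo := by
  ext i
  fin_cases i <;> simp [Finsupp.single_apply]

lemma piM_rho (p : MvPolynomial (Fin 2) K) : piM K (rho K p) = p := by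
  have e : (piM K).toLinearMap ∘ₗ rho K = LinearMap.id := by
    apply (MvPolynomial.basisMonomials (Fin 2) K).ext
    intro mo
    rw [LinearMap.comp_apply, LinearMap.id_apply]
    have hb : MvPolynomial.basisMonomials (Fin 2) K mo = MvPolynomial.monomial mo (1:K) := by
      rw [MvPolynomial.coe_basisMonomials]
    rw [hb, rho_monomial, AlgHom.toLinearMap_apply, nf, piM_sg_nf_gen, single_add_single]
  exact DFunLike.congr_fun e p

lemma SpanW_ext {P : List (Fin 3) → Prop} {V : Type*} [AddCommGroup V] [Module K V]
    (F G : M K →ₗ[K] V)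
    (h : ∀ w, P w → F (sg K w) = G (sg K w)) {m : M K} (hm : m ∈ SpanW K P) :
    F m = G m := by
  classical
  rw [m_eq_sum_smul_sg K m, map_sum, map_sum]
  refine Finset.sum_congr rfl fun a ha => ?_
  rw [map_smul, map_smul, h _ (mem_SpanW_supp K hm a ha)]

lemma isY_eq {w : List (Fin 3)} (h : isY w) : w = List.replicate (cy w) 1 := by
  induction w with
  | nil => simp
  | cons i w ih =>
    obtain ⟨h1, h2⟩ := (isY_cons i w).mp h
    subst h1
    have e : cy ((1:Fin 3) :: w) = cy w + 1 := by simp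
    rw [e, List.replicate_succ]
    rw [← ih h2]

lemma isNormal_eq {w : List (Fin 3)} (h : isNormal w) :
    w = List.replicate (cx w) 0 ++ List.replicate (cy w) 1 := by
  induction w with
  | nil => simp
  | cons i w ih =>
    fin_cases i <;> simp only [fm0, fm1, fm2] at h ⊢
    · have hn : isNormal w := (isNormal_x w).mp h
      have e : cx ((0:Fin 3) :: w) = cx w + 1 := by simp
      have e2 : cy ((0:Fin 3) :: w) = cy w := by simp
      rw [e, e2, List.replicate_succ, List.cons_append]
      rw [← ih hn]
    · have hYw : isY w := (isNormal_y w).mp h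
      have hcx : cx w = 0 := (isY_counts hYw).1
      have e : cx ((1:Fin 3) :: w) = 0 := by simp [hcx]
      have e2 : cy ((1:Fin 3) :: w) = cy w + 1 := by simp
      rw [e, e2, List.replicate_zero, List.nil_append, List.replicate_succ]
      rw [← isY_eq hYw]
    · exact absurd h (isNormal_z w)

@[simp] lemma count_replicate_xy (n : ℕ) :
    cx (List.replicate n (0:Fin 3)) = n ∧ cy (List.replicate n (0:Fin 3)) = 0 ∧
    cx (List.replicate n (1:Fin 3)) = 0 ∧ cy (List.replicate n (1:Fin 3)) = n := by
  refine ⟨?_, ?_, ?_, ?_⟩ <;> simp [cx, cy, List.count_replicate]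

@[simp] lemma cx_append (u v : List (Fin 3)) : cx (u ++ v) = cx u + cx v := by
  simp [cx, List.count_append]
@[simp] lemma cy_append (u v : List (Fin 3)) : cy (u ++ v) = cy u + cy v := by
  simp [cy, List.count_append]

lemma rho_piM_normal {w : List (Fin 3)} (h : isNormal w) :
    rho K (piM K (sg K w)) = sg K w := by
  conv_lhs => rw [isNormal_eq h]
  rw [piM_sg_nf_gen, rho_monomial]
  have : nf (Finsupp.single (0:Fin 2) (cx w) + Finsupp.single (1:Fin 2) (cy w))
      = List.replicate (cx w) 0 ++ List.replicate (cy w) 1 := by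
    rw [nf]
    congr 1 <;> · congr 1; simp [Finsupp.single_apply]
  rw [this, ← isNormal_eq h]

lemma rho_piM_NS {s : M K} (hs : s ∈ NS K) : rho K (piM K s) = s := by
  have := SpanW_ext K (rho K ∘ₗ (piM K).toLinearMap) LinearMap.id
    (fun w hw => ?_) hs
  · simpa using this
  · simpa using rho_piM_normal K hw

/-! ### Correspondence between the abstract differential and the concrete one -/

lemma d_wprod (d : FreeAlgebra K (Fin 3) →ₗ[K] FreeAlgebra K (Fin 3))
    (hd1 : d 1 = 0)
    (hderx : ∀ b, d (FreeAlgebra.ι K 0 * b) = FreeAlgebra.ι K 0 * d b)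
    (hdery : ∀ b, d (FreeAlgebra.ι K 1 * b) = FreeAlgebra.ι K 1 * d b)
    (hderz : ∀ b, d (FreeAlgebra.ι K 2 * b) =
      (FreeAlgebra.ι K 0 * FreeAlgebra.ι K 1 - FreeAlgebra.ι K 1 * FreeAlgebra.ι K 0) * b
        - FreeAlgebra.ι K 2 * d b) :
    ∀ w, d (wprod K w) = (Phi K).symm (dW K w) := by
  intro w
  induction w with
  | nil => simp [hd1]
  | cons i w ih =>
    fin_cases i <;> simp only [fm0, fm1, fm2, wprod_cons]
    · rw [hderx, ih, dW_x, map_mul, symm_sg]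
      simp
    · rw [hdery, ih, dW_y, map_mul, symm_sg]
      simp
    · rw [hderz, ih, dW_z, map_sub, map_mul, map_mul, symm_sg, symm_sg, map_sub, symm_sg]
      simp [symm_sg, wprod, mul_assoc]

lemma d_corr (d : FreeAlgebra K (Fin 3) →ₗ[K] FreeAlgebra K (Fin 3))
    (hd1 : d 1 = 0)
    (hderx : ∀ b, d (FreeAlgebra.ι K 0 * b) = FreeAlgebra.ι K 0 * d b)
    (hdery : ∀ b, d (FreeAlgebra.ι K 1 * b) = FreeAlgebra.ι K 1 * d b)
    (hderz : ∀ b, d (FreeAlgebra.ι K 2 * b) =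
      (FreeAlgebra.ι K 0 * FreeAlgebra.ι K 1 - FreeAlgebra.ι K 1 * FreeAlgebra.ι K 0) * b
        - FreeAlgebra.ι K 2 * d b) :
    ∀ a, Phi K (d a) = Dop K (Phi K a) := by
  have e : (Phi K).toLinearMap ∘ₗ d ∘ₗ (Phi K).symm.toLinearMap = Dop K := by
    apply comp_ext
    intro w
    simp only [LinearMap.comp_apply, AlgEquiv.toLinearMap_apply, symm_sg, D_sg]
    rw [d_wprod K d hd1 hderx hdery hderz, AlgEquiv.apply_symm_apply]
  intro a
  have := DFunLike.congr_fun e (Phi K a)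
  simpa [AlgEquiv.symm_apply_apply] using this

lemma piM_Phi (a : FreeAlgebra K (Fin 3)) : piM K (Phi K a) = projPoly K a := by
  rw [piM, AlgHom.comp_apply]
  congr 1
  exact AlgEquiv.symm_apply_apply _ _

end Res
end


/-- let `A = K⟨x,y,z⟩` be the free unital associative algebra on `x, y`
(degree 0) and `z` (degree 1), graded by the number of occurrences of `z` (formalized as
any multiplicative internal ℕ-grading `H` with `x, y` of degree 0 and `z` of degree 1),
equipped with the degree `−1` graded derivation `d` with `dx = dy = 0`, `dz = xy − yx`.
Then the evident surjection `π : K⟨x,y,z⟩ → K[x,y]` (with `z ↦ 0`) is a quasi-isomorphism: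
`π` identifies `H 0 / d(H 1)` with `K[x,y]`, and the homology vanishes in degrees `n ≥ 1`.
In particular `K⟨x,y,z⟩` is a cofibrant replacement of `K[x,y]` in unital dg algebras. -/
theorem freeAlgebra_resolution_of_polynomials (K : Type*) [Field K] [CharZero K]
    (H : ℕ → Submodule K (FreeAlgebra K (Fin 3)))
    (hinternal : DirectSum.IsInternal H)
    (h1 : (1 : FreeAlgebra K (Fin 3)) ∈ H 0)
    (hx : ι K (0 : Fin 3) ∈ H 0) (hy : ι K (1 : Fin 3) ∈ H 0) (hz : ι K (2 : Fin 3) ∈ H 1)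
    (hmul : ∀ m n : ℕ, ∀ a ∈ H m, ∀ b ∈ H n, a * b ∈ H (m + n))
    (d : FreeAlgebra K (Fin 3) →ₗ[K] FreeAlgebra K (Fin 3))
    (hdx : d (ι K (0 : Fin 3)) = 0) (hdy : d (ι K (1 : Fin 3)) = 0)
    (hdz : d (ι K (2 : Fin 3)) = ι K (0 : Fin 3) * ι K (1 : Fin 3)
        - ι K (1 : Fin 3) * ι K (0 : Fin 3))
    (hdeg : ∀ n : ℕ, ∀ a ∈ H (n + 1), d a ∈ H n)
    (hdeg0 : ∀ a ∈ H 0, d a = 0)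
    (hd2 : ∀ a, d (d a) = 0)
    (hder : ∀ m : ℕ, ∀ a ∈ H m, ∀ b, d (a * b) = d a * b + ((-1 : K) ^ m) • (a * d b)) :
    -- π is surjective onto `K[x,y]` already on degree-zero elements
    (∀ p : MvPolynomial (Fin 2) K, ∃ a ∈ H 0, projPoly K a = p) ∧
    -- H₀ of the complex is `K[x,y]`: the kernel of `π` on `H 0` is exactly `d (H 1)`
    (∀ a ∈ H 0, (projPoly K a = 0 ↔ ∃ b ∈ H 1, d b = a)) ∧
    -- the homology vanishes in positive degrees
    (∀ n : ℕ, ∀ a ∈ H (n + 1), d a = 0 → ∃ b ∈ H (n + 2), d b = a) := by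
  classical
  have hd1 : d 1 = 0 := hdeg0 1 h1
  have hderx : ∀ b, d (ι K 0 * b) = ι K 0 * d b := by
    intro b
    rw [hder 0 _ hx b, hdx, zero_mul, zero_add, pow_zero, one_smul]
  have hdery : ∀ b, d (ι K 1 * b) = ι K 1 * d b := by
    intro b
    rw [hder 0 _ hy b, hdy, zero_mul, zero_add, pow_zero, one_smul]
  have hderz : ∀ b, d (ι K 2 * b) =
      (ι K 0 * ι K 1 - ι K 1 * ι K 0) * b - ι K 2 * d b := by
    intro b
    rw [hder 1 _ hz b, hdz, pow_one, neg_one_smul]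
    abel
  have dcorr := Res.d_corr K d hd1 hderx hdery hderz
  refine ⟨?_, ?_, ?_⟩
  · -- surjectivity
    intro p
    refine ⟨(Res.Phi K).symm (Res.rho K p), ?_, ?_⟩
    · exact Res.symm_Zk K H h1 hx hy hz hmul (Res.rho_mem_Zk K p)
    · have : projPoly K ((Res.Phi K).symm (Res.rho K p)) = Res.piM K (Res.rho K p) := by
        rw [Res.piM, AlgHom.comp_apply]
        rfl
      rw [this, Res.piM_rho]
  · -- kernel description in degree 0
    intro a ha
    constructor
    · intro hpa
      have hmZ : Res.Phi K a ∈ Res.Zk K 0 :=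
        Res.HsubZ K H hinternal h1 hx hy hz hmul ha
      have hD : Res.Dop K (Res.Phi K a) = 0 := by
        rw [← dcorr, hdeg0 a ha, map_zero]
      obtain ⟨c, hc, hNS⟩ := Res.key K (Res.Phi K a) hD 0 hmZ
      have hpi : Res.piM K (Res.Phi K a - Res.Dop K c) = 0 := by
        rw [map_sub, Res.piM_Dop, sub_zero, Res.piM_Phi, hpa]
      have hzero : Res.Phi K a - Res.Dop K c = 0 := by
        rw [← Res.rho_piM_NS K hNS, hpi, map_zero]
      have hDc : Res.Dop K c = Res.Phi K a := by
        have := sub_eq_zero.mp hzero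
        exact this.symm
      refine ⟨(Res.Phi K).symm c, Res.symm_Zk K H h1 hx hy hz hmul hc, ?_⟩
      apply (Res.Phi K).injective
      rw [dcorr, AlgEquiv.apply_symm_apply, hDc]
    · rintro ⟨b, hb, rfl⟩
      have : projPoly K (d b) = Res.piM K (Res.Phi K (d b)) := (Res.piM_Phi K _).symm
      rw [this, dcorr, Res.piM_Dop]
  · -- exactness in positive degrees
    intro n a hA hda
    have hmZ : Res.Phi K a ∈ Res.Zk K (n + 1) :=
      Res.HsubZ K H hinternal h1 hx hy hz hmul hA
    have hD : Res.Dop K (Res.Phi K a) = 0 := by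
      rw [← dcorr, hda, map_zero]
    obtain ⟨c, hc, hNS⟩ := Res.key K (Res.Phi K a) hD (n + 1) hmZ
    have hsZ : Res.Phi K a - Res.Dop K c ∈ Res.Zk K (n + 1) :=
      sub_mem hmZ (Res.Dop_Zk K hc)
    have hzero : Res.Phi K a - Res.Dop K c = 0 := by
      by_contra hne
      obtain ⟨b, hb⟩ := Finsupp.support_nonempty_iff.mpr (mt MonoidAlgebra.coeff_eq_zero.mp hne)
      have hN : Res.isNormal (FreeMonoid.toList b) := Res.mem_SpanW_supp K hNS b hb
      have hcz : Res.cz (FreeMonoid.toList b) = n + 1 := Res.mem_SpanW_supp K hsZ b hb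
      have := Res.isNormal_cz hN
      omega
    have hDc : Res.Dop K c = Res.Phi K a := (sub_eq_zero.mp hzero).symm
    refine ⟨(Res.Phi K).symm c, Res.symm_Zk K H h1 hx hy hz hmul hc, ?_⟩
    apply (Res.Phi K).injective
    rw [dcorr, AlgEquiv.apply_symm_apply, hDc]
end

section
/- Let K be a field of characteristic zero, 𝔤 a Lie algebra over K. The symmetrization map σ: Sym(𝔤) → U𝔤 is equivariant for the adjoint actions: σ(x · p) = ι(x)σ(p) − σ(p)ι(x) for x ∈ 𝔤 and p ∈ Sym(𝔤), where x acts on Sym(𝔤) as the derivation extending ad(x) on 𝔤. -/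
lemma comm_list_prod {R : Type*} [Ring R] (a : R) :
    ∀ (n : ℕ) (u : Fin n → R),
      a * (List.ofFn u).prod - (List.ofFn u).prod * a =
        ∑ k : Fin n, (List.ofFn fun i => if i = k then a * u k - u k * a else u i).prod := by
  intro n
  induction n with
  | zero => intro u; simp
  | succ n ih =>
    intro u
    rw [List.ofFn_succ, List.prod_cons, Fin.sum_univ_succ]
    have h0 : (List.ofFn fun i : Fin (n+1) => if i = 0 then a * u 0 - u 0 * a else u i)
        = (a * u 0 - u 0 * a) :: List.ofFn (fun i : Fin n => u i.succ) := by
      rw [List.ofFn_succ]; simp [Fin.succ_ne_zero]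
    have hk : ∀ k : Fin n,
        (List.ofFn fun i : Fin (n+1) => if i = k.succ then a * u k.succ - u k.succ * a else u i)
        = u 0 :: List.ofFn (fun i : Fin n =>
            if i = k then a * u k.succ - u k.succ * a else u i.succ) := by
      intro k
      rw [List.ofFn_succ]
      simp [Fin.succ_inj, (Fin.succ_ne_zero k).symm]
    simp only [h0, List.prod_cons]
    rw [Finset.sum_congr rfl fun k _ => by rw [hk k]]
    simp only [List.prod_cons, ← Finset.mul_sum, ← ih (fun i => u i.succ)]
    noncomm_ring

lemma deriv_prod {K S : Type*} [CommRing K] [CommRing S] [Algebra K S]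
    (D : Derivation K S S) :
    ∀ (n : ℕ) (g : Fin n → S),
      D (∏ i, g i) = ∑ j, ∏ i, Function.update g j (D (g j)) i := by
  intro n
  induction n with
  | zero => intro g; simp
  | succ n ih =>
    intro g
    rw [Fin.prod_univ_succ, Derivation.leibniz, Fin.sum_univ_succ]
    have h0 : ∏ i, Function.update g 0 (D (g 0)) i
        = D (g 0) * ∏ i : Fin n, g i.succ := by
      rw [Fin.prod_univ_succ]
      simp [Function.update_apply, Fin.succ_ne_zero]
    have hk : ∀ k : Fin n, ∏ i, Function.update g k.succ (D (g k.succ)) i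
        = g 0 * ∏ i : Fin n, Function.update (fun i : Fin n => g i.succ) k (D (g k.succ)) i := by
      intro k
      rw [Fin.prod_univ_succ]
      simp [Function.update_apply, Fin.succ_inj, (Fin.succ_ne_zero k).symm]
    simp only [h0, hk, ← Finset.mul_sum, ← ih (fun i => g i.succ)]
    simp [smul_eq_mul]
    ring


/-- let `K` be a field of characteristic zero and `𝔤` a Lie algebra over
`K`.  Let `S` (with `ιS : 𝔤 → S`) be the symmetric algebra on `𝔤`, let
`σ : Sym(𝔤) → U𝔤` be the symmetrization map (determined on monomials by the
symmetrization formula), and let `x` act on `Sym(𝔤)` by the unique derivation `D x`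
extending `ad x`, and on `U𝔤` by the commutator.  Then `σ` is equivariant:
`σ(x · p) = ι(x)σ(p) − σ(p)ι(x)` for all `x ∈ 𝔤`, `p ∈ Sym(𝔤)`. -/
theorem pbw_symmetrization_equivariant (K 𝔤 S : Type*) [Field K] [CharZero K]
    [LieRing 𝔤] [LieAlgebra K 𝔤] [CommRing S] [Algebra K S] (ιS : 𝔤 →ₗ[K] S)
    -- `S` is the symmetric algebra: it is spanned by the monomials in `ιS`
    (hspan : Submodule.span K {s : S | ∃ (n : ℕ) (v : Fin n → 𝔤), s = ∏ i, ιS (v i)} = ⊤)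
    -- the symmetrization map
    (σ : S →ₗ[K] UniversalEnvelopingAlgebra K 𝔤)
    (hσ : ∀ (n : ℕ) (v : Fin n → 𝔤),
      σ (∏ i, ιS (v i)) = (n.factorial : K)⁻¹ •
        ∑ τ : Equiv.Perm (Fin n),
          (List.ofFn fun i => (UniversalEnvelopingAlgebra.ι K (v (τ i)) :
            UniversalEnvelopingAlgebra K 𝔤)).prod)
    -- the action of `𝔤` on `S` by derivations extending the adjoint action
    (D : 𝔤 → Derivation K S S)
    (hD : ∀ x y : 𝔤, D x (ιS y) = ιS ⁅x, y⁆) :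
    ∀ (x : 𝔤) (p : S),
      σ (D x p) = UniversalEnvelopingAlgebra.ι K x * σ p
        - σ p * UniversalEnvelopingAlgebra.ι K x := by
  intro x p
  set ι := UniversalEnvelopingAlgebra.ι K (L := 𝔤) with hι
  have hmem : p ∈ Submodule.span K {s : S | ∃ (n : ℕ) (v : Fin n → 𝔤), s = ∏ i, ιS (v i)} := by
    rw [hspan]; exact Submodule.mem_top
  induction hmem using Submodule.span_induction with
  | zero => simp
  | add p q hp hq ihp ihq =>
    simp only [map_add, ihp, ihq, mul_add, add_mul]; abel
  | smul c p hp ih =>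
    simp only [map_smul, Derivation.map_smul, ih, smul_sub, mul_smul_comm, smul_mul_assoc]
  | mem s hs =>
    obtain ⟨n, v, rfl⟩ := hs
    -- compute the derivation of the monomial
    have hder : (D x) (∏ i, ιS (v i))
        = ∑ j, ∏ i, ιS (Function.update v j ⁅x, v j⁆ i) := by
      rw [deriv_prod (D x) n (fun i => ιS (v i))]
      refine Finset.sum_congr rfl fun j _ => Finset.prod_congr rfl fun i _ => ?_
      simp only [Function.update_apply, hD]
      split <;> simp_all
    rw [hder, map_sum]
    rw [Finset.sum_congr rfl fun j _ => hσ n (Function.update v j ⁅x, v j⁆)]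
    rw [hσ n v]
    -- rewrite the RHS commutator
    rw [mul_smul_comm, smul_mul_assoc, ← smul_sub, Finset.mul_sum, Finset.sum_mul,
      ← Finset.sum_sub_distrib]
    rw [← Finset.smul_sum]
    congr 1
    rw [Finset.sum_comm]
    refine Finset.sum_congr rfl fun τ _ => ?_
    rw [comm_list_prod (ι x) n (fun i => ι (v (τ i)))]
    have hcomm : ∀ y : 𝔤, ι x * ι y - ι y * ι x = ι ⁅x, y⁆ := fun y => by
      letI : LieRing (UniversalEnvelopingAlgebra K 𝔤) := LieRing.ofAssociativeRing
      rw [LieHom.map_lie, Ring.lie_def]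
    refine Fintype.sum_equiv τ.symm _ _ fun j => congrArg List.prod (congrArg List.ofFn (funext fun i => ?_))
    simp only [Function.update_apply, hcomm, Equiv.apply_symm_apply]
    by_cases h : i = τ.symm j
    · subst h; simp
    · rw [if_neg (fun hc => h (by rw [← hc, Equiv.symm_apply_apply])), if_neg h]
end
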